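/- Define f(m) = (2c/Δ²)(1 − 2m)·ln((1−m)/m) + (K/2)·Δ·min{m, 1−m} for m ∈ (0, 1), where c, Δ, K > 0. Then f is symmetric about 1/2, i.e., f(m) = f(1 − m) for all m ∈ (0, 1), f(m) → ∞ as m → 0⁺, and f has exactly two global minimizers on (0,1), of the form α* and 1 − α* for some α* ∈ (0, 1/2). -/

import Mathlib

open Set Filter

private lemma aux_hasDerivAt_L {m : ℝ} (hm0 : 0 < m) (hm1 : m < 1) :
    HasDerivAt (fun x : ℝ => Real.log (1 - x) - Real.log x) (-(1/(m*(1-m)))) m := by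
  have h1 : HasDerivAt (fun x : ℝ => 1 - x) (-1) m := by
    simpa using (hasDerivAt_id m).const_sub 1
  have h2 : HasDerivAt (fun x : ℝ => Real.log (1 - x)) ((1-m)⁻¹ * (-1)) m := by
    simpa [Function.comp_def] using (Real.hasDerivAt_log (by linarith : (1:ℝ) - m ≠ 0)).comp m h1
  have h3 : HasDerivAt (fun x : ℝ => Real.log x) m⁻¹ m := Real.hasDerivAt_log hm0.ne'
  have h := h2.sub h3
  refine HasDerivAt.congr_deriv (by exact h) ?_
  have hm1' : (1:ℝ) - m ≠ 0 := by linarith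
  field_simp
  ring

private noncomputable def gfun : ℝ → ℝ :=
  fun x => 2*(Real.log (1-x) - Real.log x) + (1-2*x)/(x*(1-x))

private lemma aux_hasDerivAt_F (A B : ℝ) {m : ℝ} (hm0 : 0 < m) (hm1 : m < 1) :
    HasDerivAt (fun x : ℝ => A*(1-2*x)*(Real.log (1-x) - Real.log x) + B*x)
      (B - A * gfun m) m := by
  have hL := aux_hasDerivAt_L hm0 hm1
  have h0 : HasDerivAt (fun x : ℝ => 1-2*x) (-2) m := by
    simpa using ((hasDerivAt_id m).const_mul 2).const_sub 1
  have h1 : HasDerivAt (fun x : ℝ => A*(1-2*x)) (A*(-2)) m := h0.const_mul A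
  have hBx : HasDerivAt (fun x : ℝ => B*x) B m := by
    simpa using (hasDerivAt_id m).const_mul B
  have h := (h1.mul hL).add hBx
  refine HasDerivAt.congr_deriv (by exact h) ?_
  have hm1' : (1:ℝ) - m ≠ 0 := by linarith
  simp only [gfun]
  field_simp
  ring

private lemma aux_hasDerivAt_g {m : ℝ} (hm0 : 0 < m) (hm1 : m < 1) :
    HasDerivAt gfun (-(1/(m*(1-m))^2)) m := by
  have hL := (aux_hasDerivAt_L hm0 hm1).const_mul 2
  have hu : HasDerivAt (fun x : ℝ => 1-2*x) (-2) m := by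
    simpa using ((hasDerivAt_id m).const_mul 2).const_sub 1
  have hv : HasDerivAt (fun x : ℝ => x*(1-x)) (1*(1-m) + m*(-1)) m :=
    (hasDerivAt_id m).mul ((hasDerivAt_id m).const_sub 1)
  have hv0 : m*(1-m) ≠ 0 := by
    have : 0 < m*(1-m) := by nlinarith
    exact this.ne'
  have hdiv := hu.div hv hv0
  have h := hL.add hdiv
  refine HasDerivAt.congr_deriv (by exact h) ?_
  have hm1' : (1:ℝ) - m ≠ 0 := by linarith
  field_simp
  ring

private lemma aux_g_anti : StrictAntiOn gfun (Ioo (0:ℝ) 1) := by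
  apply strictAntiOn_of_deriv_neg (convex_Ioo _ _)
  · intro x hx
    exact ((aux_hasDerivAt_g hx.1 hx.2).continuousAt).continuousWithinAt
  · intro x hx
    rw [interior_Ioo] at hx
    rw [(aux_hasDerivAt_g hx.1 hx.2).deriv]
    have h0 : 0 < x*(1-x) := by nlinarith [hx.1, hx.2]
    have : 0 < (x*(1-x))^2 := pow_pos h0 2
    have := one_div_pos.mpr this
    linarith

private lemma aux_g_half : gfun (1/2) = 0 := by
  norm_num [gfun]

private lemma aux_Ltop : Tendsto (fun m : ℝ => Real.log (1-m) - Real.log m)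
    (nhdsWithin 0 (Ioi (0:ℝ))) atTop := by
  have h1 : Tendsto (fun m : ℝ => Real.log (1-m)) (nhdsWithin 0 (Ioi (0:ℝ))) (nhds 0) := by
    have hc : ContinuousAt (fun m : ℝ => Real.log (1-m)) 0 := by
      apply (Real.continuousAt_log (by norm_num : (1:ℝ) - 0 ≠ 0)).comp
      exact (continuous_const.sub continuous_id).continuousAt
    have := hc.continuousWithinAt (s := Ioi (0:ℝ))
    simpa [ContinuousWithinAt] using this
  have h2 : Tendsto (fun m : ℝ => -Real.log m) (nhdsWithin 0 (Ioi (0:ℝ))) atTop :=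
    tendsto_neg_atBot_atTop.comp Real.tendsto_log_nhdsGT_zero
  simpa [sub_eq_add_neg] using h1.add_atTop h2

private lemma aux_g_top : Tendsto gfun (nhdsWithin 0 (Ioi (0:ℝ))) atTop := by
  apply tendsto_atTop_mono' _ _ (aux_Ltop.const_mul_atTop (by norm_num : (0:ℝ) < 2))
  filter_upwards [Ioo_mem_nhdsGT_of_mem (by norm_num : (0:ℝ) ∈ Ico (0:ℝ) (1/2))] with m hm
  have h1 : 0 < m*(1-m) := by nlinarith [hm.1, hm.2]
  have h2 : 0 ≤ (1-2*m)/(m*(1-m)) := by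
    apply div_nonneg (by linarith [hm.2]) h1.le
  simp only [gfun]
  linarith

/-- For `c, Δ, K > 0`, the function
`f(m) = (2c/Δ²)(1 - 2m) ln((1-m)/m) + (K/2) Δ min{m, 1-m}` on `(0,1)`
is symmetric about `1/2`, blows up as `m → 0⁺`, and its set of global minimizers over
`(0,1)` is exactly `{α*, 1 - α*}` for some `α* ∈ (0, 1/2)`. -/
theorem stopping_objective_minimizers
    (c Δ K : ℝ) (hc : 0 < c) (hΔ : 0 < Δ) (hK : 0 < K)
    (f : ℝ → ℝ)
    (hf : ∀ m : ℝ, f m =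
      2 * c / Δ ^ 2 * (1 - 2 * m) * Real.log ((1 - m) / m) +
        K / 2 * Δ * min m (1 - m)) :
    (∀ m ∈ Ioo (0 : ℝ) 1, f m = f (1 - m)) ∧
    Tendsto f (nhdsWithin 0 (Ioi (0 : ℝ))) atTop ∧
    ∃ α : ℝ, α ∈ Ioo (0 : ℝ) (1 / 2) ∧
      {m : ℝ | m ∈ Ioo (0 : ℝ) 1 ∧ ∀ m' ∈ Ioo (0 : ℝ) 1, f m ≤ f m'}
        = {α, 1 - α} := by
  set A := 2 * c / Δ ^ 2 with hA_def
  set B := K / 2 * Δ with hB_def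
  have hA : 0 < A := by positivity
  have hB : 0 < B := by positivity
  -- symmetry
  have hsymm : ∀ m ∈ Ioo (0 : ℝ) 1, f m = f (1 - m) := by
    intro m hm
    rw [hf m, hf (1-m)]
    have e1 : (1:ℝ) - (1 - m) = m := by ring
    rw [e1]
    rw [Real.log_div (by linarith [hm.2] : (1:ℝ) - m ≠ 0) (hm.1.ne'),
        Real.log_div (hm.1.ne') (by linarith [hm.2] : (1:ℝ) - m ≠ 0), min_comm]
    ring
  refine ⟨hsymm, ?_, ?_⟩
  -- blow-up
  · apply tendsto_atTop_mono' _ _ (aux_Ltop.const_mul_atTop (by positivity : (0:ℝ) < A/2))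
    filter_upwards [Ioo_mem_nhdsGT_of_mem (by norm_num : (0:ℝ) ∈ Ico (0:ℝ) (1/4))] with m hm
    have hm0 : 0 < m := hm.1
    have hm4 : m < 1/4 := hm.2
    rw [hf m, Real.log_div (by linarith : (1:ℝ) - m ≠ 0) hm0.ne']
    have hL0 : 0 ≤ Real.log (1-m) - Real.log m := by
      have := Real.log_le_log hm0 (by linarith : m ≤ 1 - m)
      linarith
    have h1 : A/2 * (Real.log (1-m) - Real.log m) ≤ A*(1-2*m) * (Real.log (1-m) - Real.log m) :=
      mul_le_mul_of_nonneg_right (by nlinarith) hL0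
    have h2 : 0 ≤ B * min m (1-m) := by
      have : 0 ≤ min m (1-m) := le_min hm0.le (by linarith)
      positivity
    linarith
  -- minimizers
  · have hfF : ∀ m ∈ Ioc (0:ℝ) (1/2),
        f m = A*(1-2*m)*(Real.log (1-m) - Real.log m) + B*m := by
      intro m hm
      rw [hf m, Real.log_div (by linarith [hm.2] : (1:ℝ) - m ≠ 0) hm.1.ne',
        min_eq_left (by linarith [hm.2])]
    -- find m₀ with gfun m₀ > B/A
    have hev : ∀ᶠ m in nhdsWithin 0 (Ioi (0:ℝ)), m ∈ Ioo (0:ℝ) (1/2) :=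
      eventually_of_mem (Ioo_mem_nhdsGT_of_mem (by norm_num : (0:ℝ) ∈ Ico (0:ℝ) (1/2)))
        (fun x hx => hx)
    obtain ⟨m₀, hgm₀, hm₀⟩ :=
      ((aux_g_top.eventually (eventually_gt_atTop (B/A))).and hev).exists
    -- IVT to find α
    have hBA : 0 < B / A := by positivity
    have hgcont : ContinuousOn gfun (Icc m₀ (1/2)) := by
      intro x hx
      have hx0 : 0 < x := lt_of_lt_of_le hm₀.1 hx.1
      have hx1 : x < 1 := lt_of_le_of_lt hx.2 (by norm_num)
      exact ((aux_hasDerivAt_g hx0 hx1).continuousAt).continuousWithinAt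
    have hsub := intermediate_value_Icc' (le_of_lt hm₀.2) hgcont
    have hmem : B / A ∈ Icc (gfun (1/2)) (gfun m₀) := by
      rw [aux_g_half]; exact ⟨hBA.le, hgm₀.le⟩
    obtain ⟨α, hαmem, hgα⟩ := hsub hmem
    have hα0 : 0 < α := lt_of_lt_of_le hm₀.1 hαmem.1
    have hαhalf : α < 1/2 := by
      rcases lt_or_eq_of_le hαmem.2 with h | h
      · exact h
      · exfalso; rw [h, aux_g_half] at hgα; linarith
    have hα1 : α < 1 := by linarith
    -- set notation for F
    set F : ℝ → ℝ := fun x => A*(1-2*x)*(Real.log (1-x) - Real.log x) + B*x with hF_def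
    -- strict antitone on (0, α]
    have hanti : StrictAntiOn F (Ioc (0:ℝ) α) := by
      apply strictAntiOn_of_deriv_neg (convex_Ioc _ _)
      · intro x hx
        have hx0 : 0 < x := hx.1
        have hx1 : x < 1 := lt_of_le_of_lt hx.2 hα1
        exact ((aux_hasDerivAt_F A B hx0 hx1).continuousAt).continuousWithinAt
      · intro x hx
        rw [interior_Ioc] at hx
        have hx1 : x < 1 := lt_trans hx.2 hα1
        rw [(aux_hasDerivAt_F A B hx.1 hx1).deriv]
        have hgt : gfun α < gfun x :=
          aux_g_anti ⟨hx.1, hx1⟩ ⟨hα0, hα1⟩ hx.2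
        rw [hgα] at hgt
        have := (div_lt_iff₀ hA).mp hgt
        nlinarith
    -- strict monotone on [α, 1/2]
    have hmono : StrictMonoOn F (Icc α (1/2)) := by
      apply strictMonoOn_of_deriv_pos (convex_Icc _ _)
      · intro x hx
        have hx0 : 0 < x := lt_of_lt_of_le hα0 hx.1
        have hx1 : x < 1 := lt_of_le_of_lt hx.2 (by norm_num)
        exact ((aux_hasDerivAt_F A B hx0 hx1).continuousAt).continuousWithinAt
      · intro x hx
        rw [interior_Icc] at hx
        have hx0 : 0 < x := lt_trans hα0 hx.1
        have hx1 : x < 1 := lt_trans hx.2 (by norm_num)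
        rw [(aux_hasDerivAt_F A B hx0 hx1).deriv]
        have hlt : gfun x < gfun α :=
          aux_g_anti ⟨hα0, hα1⟩ ⟨hx0, hx1⟩ hx.1
        rw [hgα] at hlt
        have := (lt_div_iff₀ hA).mp hlt
        nlinarith
    -- α is the strict minimizer on (0, 1/2]
    have hαIoc : α ∈ Ioc (0:ℝ) (1/2) := ⟨hα0, hαhalf.le⟩
    have hmin_half : ∀ m ∈ Ioc (0:ℝ) (1/2), m ≠ α → f α < f m := by
      intro m hm hne
      rw [hfF α hαIoc, hfF m hm]
      rcases lt_or_gt_of_ne hne with h | h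
      · exact hanti ⟨hm.1, h.le⟩ ⟨hα0, le_refl α⟩ h
      · exact hmono ⟨le_refl α, hαhalf.le⟩ ⟨h.le, hm.2⟩ h
    have hglobal : ∀ m ∈ Ioo (0:ℝ) 1, f α ≤ f m := by
      intro m hm
      rcases le_or_gt m (1/2) with h | h
      · rcases eq_or_ne m α with rfl | hne
        · exact le_refl _
        · exact (hmin_half m ⟨hm.1, h⟩ hne).le
      · have h1m : (1 - m) ∈ Ioc (0:ℝ) (1/2) := ⟨by linarith [hm.2], by linarith⟩
        rw [hsymm m hm]
        rcases eq_or_ne (1-m) α with he | hne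
        · rw [he]
        · exact (hmin_half (1-m) h1m hne).le
    refine ⟨α, ⟨hα0, hαhalf⟩, ?_⟩
    ext x
    simp only [mem_setOf_eq, mem_insert_iff, mem_singleton_iff]
    constructor
    · rintro ⟨hx, hle⟩
      have hxα : f x = f α :=
        le_antisymm (hle α ⟨hα0, hα1⟩) (hglobal x hx)
      rcases le_or_gt x (1/2) with h | h
      · left
        by_contra hne
        exact absurd hxα (hmin_half x ⟨hx.1, h⟩ hne).ne'
      · right
        have h1x : (1 - x) ∈ Ioc (0:ℝ) (1/2) := ⟨by linarith [hx.2], by linarith⟩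
        have : f (1-x) = f α := by rw [← hsymm x hx]; exact hxα
        by_contra hne
        have hne' : 1 - x ≠ α := fun hh => hne (by linarith [hh] : x = 1 - α)
        exact absurd this (hmin_half (1-x) h1x hne').ne'
    · rintro (h | h)
      · rw [h]; exact ⟨⟨hα0, hα1⟩, hglobal⟩
      · rw [h]
        refine ⟨⟨by linarith, by linarith⟩, ?_⟩
        intro m' hm'
        rw [← hsymm α ⟨hα0, hα1⟩]
        exact hglobal m' hm'
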